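/- Let g, ζ ∈ ℝ^n and 0 ≤ α ≤ 1 with ‖ζ‖ ≤ α‖g‖. Then ⟪g + ζ, g⟫ ≥ √(1 − α²)·‖g + ζ‖·‖g‖ ≥ √(1 − α²)·(1 − α)·‖g‖². -/
import Mathlib


open scoped InnerProductSpace

/-- Lower bound on the inner product between a gradient and its relative perturbation. -/
theorem cos_lower_bound {n : ℕ} (g ζ : EuclideanSpace ℝ (Fin n)) (α : ℝ)
    (hα0 : 0 ≤ α) (hα1 : α ≤ 1) (hζ : ‖ζ‖ ≤ α * ‖g‖) :
    Real.sqrt (1 - α ^ 2) * ‖g + ζ‖ * ‖g‖ ≤ ⟪g + ζ, g⟫_ℝ ∧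
    Real.sqrt (1 - α ^ 2) * (1 - α) * ‖g‖ ^ 2 ≤ Real.sqrt (1 - α ^ 2) * ‖g + ζ‖ * ‖g‖ := by
  set s := ‖g‖ with hs
  set z := ‖ζ‖ with hz
  set N := ‖g + ζ‖ with hN
  set t := ⟪ζ, g⟫_ℝ with ht
  have hs0 : 0 ≤ s := norm_nonneg _
  have hz0 : 0 ≤ z := norm_nonneg _
  have hN0 : 0 ≤ N := norm_nonneg _
  have h1α : 0 ≤ 1 - α ^ 2 := by nlinarith
  set r := Real.sqrt (1 - α ^ 2) with hrdef
  have hr0 : 0 ≤ r := Real.sqrt_nonneg _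
  have hr2 : r ^ 2 = 1 - α ^ 2 := Real.sq_sqrt h1α
  have hip : ⟪(g + ζ : EuclideanSpace ℝ (Fin n)), g⟫_ℝ = s ^ 2 + t := by
    rw [inner_add_left, real_inner_self_eq_norm_sq]
  have hns : N ^ 2 = s ^ 2 + 2 * t + z ^ 2 := by
    rw [hN, norm_add_sq_real, real_inner_comm]
  have htlb : -(z * s) ≤ t := by
    have := abs_real_inner_le_norm ζ g
    have := abs_le.mp this
    linarith [this.1]
  have hRnn : 0 ≤ s ^ 2 + t := by nlinarith
  have hsq : (r * N * s) ^ 2 ≤ (s ^ 2 + t) ^ 2 := by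
    have key : 0 ≤ (t + α ^ 2 * s ^ 2) ^ 2 + (1 - α ^ 2) * s ^ 2 * (α ^ 2 * s ^ 2 - z ^ 2) := by
      have hza : z ^ 2 ≤ α ^ 2 * s ^ 2 := by nlinarith
      nlinarith [sq_nonneg (t + α ^ 2 * s ^ 2), mul_nonneg h1α (mul_nonneg (sq_nonneg s) (by linarith : (0:ℝ) ≤ α ^ 2 * s ^ 2 - z ^ 2))]
    have h : (r * N * s) ^ 2 = (1 - α ^ 2) * (s ^ 2 + 2 * t + z ^ 2) * s ^ 2 := by
      rw [show (r * N * s) ^ 2 = r ^ 2 * N ^ 2 * s ^ 2 by ring, hr2, hns]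
    rw [h]; nlinarith [key]
  have hfirst : r * N * s ≤ s ^ 2 + t := by
    have hL0 : 0 ≤ r * N * s := mul_nonneg (mul_nonneg hr0 hN0) hs0
    calc r * N * s = Real.sqrt ((r * N * s) ^ 2) := (Real.sqrt_sq hL0).symm
      _ ≤ Real.sqrt ((s ^ 2 + t) ^ 2) := Real.sqrt_le_sqrt hsq
      _ = s ^ 2 + t := Real.sqrt_sq hRnn
  constructor
  · rw [hip]; exact hfirst
  · have hNlb : (1 - α) * s ≤ N := by
      have h2 : s - z ≤ N := by
        have hc : s ≤ N + z := by
          calc s = ‖(g + ζ) - ζ‖ := by simp [hs]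
            _ ≤ N + z := norm_sub_le _ _
        linarith
      nlinarith
    nlinarith [mul_nonneg hr0 hs0, mul_nonneg (mul_nonneg hr0 hs0) (sub_nonneg.mpr hNlb)]
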